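/- Let k ≥ 2 be an integer and F_k the free group on generators x₁, ..., x_k. There exists a finite nonempty multiset A of elements of F_k, each of which is of the form x_S for some subset S ⊆ {1,...,k}, with |A| ≤ 432·k·⌈log₂ k⌉, such that for every nonempty subset C ⊆ {1,...,k}, the number of elements of A (counted with multiplicity) lying in Σ_C is at most (1 − 1/(12·log₂ k))·|A|. -/

import Mathlib

open scoped Classical
open Finset

noncomputable def Sset (L : ℕ) {k : ℕ} (ω : Fin (L+1) × (Fin k → Fin (2^L))) : Finset (Fin k) :=
  Finset.filter (fun i => (ω.2 i).val < 2^(L - ω.1.val)) Finset.univ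


lemma chord1 {q : ℝ} (h0 : 0 ≤ q) (h1 : q ≤ 1/2) : (4:ℝ) ^ (-q) ≤ 1 - q := by
  have h4 : (4:ℝ) ^ (-q) = Real.exp ((1-2*q) * (0:ℝ) + (2*q) * (-Real.log 2)) := by
    rw [Real.rpow_def_of_pos (by norm_num : (0:ℝ) < 4)]
    congr 1
    have : Real.log 4 = 2 * Real.log 2 := by
      rw [show (4:ℝ) = 2^2 by norm_num, Real.log_pow]; push_cast; ring
    rw [this]; ring
  have hc := convexOn_exp.2 (Set.mem_univ (0:ℝ)) (Set.mem_univ (-Real.log 2))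
    (by linarith : (0:ℝ) ≤ 1 - 2*q) (by linarith : (0:ℝ) ≤ 2*q) (by ring)
  simp only [smul_eq_mul] at hc
  rw [h4]
  calc Real.exp ((1-2*q) * (0:ℝ) + (2*q) * (-Real.log 2))
      ≤ (1-2*q) * Real.exp 0 + (2*q) * Real.exp (-Real.log 2) := hc
    _ = 1 - q := by
        rw [Real.exp_zero, Real.exp_neg, Real.exp_log (by norm_num : (0:ℝ) < 2)]; ring

lemma chord2 {x : ℝ} (h0 : 1/2 ≤ x) (h1 : x ≤ 1) : (4:ℝ) ^ x ≤ 4 * x := by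
  have h4 : (4:ℝ) ^ x = Real.exp ((2-2*x) * (Real.log 2) + (2*x-1) * (Real.log 4)) := by
    rw [Real.rpow_def_of_pos (by norm_num : (0:ℝ) < 4)]
    congr 1
    have : Real.log 4 = 2 * Real.log 2 := by
      rw [show (4:ℝ) = 2^2 by norm_num, Real.log_pow]; push_cast; ring
    rw [this]; ring
  have hc := convexOn_exp.2 (Set.mem_univ (Real.log 2)) (Set.mem_univ (Real.log 4))
    (by linarith : (0:ℝ) ≤ 2 - 2*x) (by linarith : (0:ℝ) ≤ 2*x - 1) (by ring)
  simp only [smul_eq_mul] at hc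
  rw [h4]
  calc Real.exp ((2-2*x) * (Real.log 2) + (2*x-1) * (Real.log 4))
      ≤ (2-2*x) * Real.exp (Real.log 2) + (2*x-1) * Real.exp (Real.log 4) := hc
    _ = 4 * x := by
        rw [Real.exp_log (by norm_num : (0:ℝ) < 2), Real.exp_log (by norm_num : (0:ℝ) < 4)]; ring

lemma core {m t : ℕ} (hm : 1 ≤ m) (h1 : m ≤ t) (h2 : t < 2*m) :
    ((t:ℝ))^m ≤ 4 * m * ((t:ℝ) - 1)^(m-1) := by
  rcases eq_or_lt_of_le hm with hm1 | hm2
  · -- m = 1, then t = 1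
    have ht1 : t = 1 := by omega
    subst ht1; rw [← hm1]; norm_num
  · have hm2' : 2 ≤ m := hm2
    have ht2 : 2 ≤ t := by omega
    have hT0 : (0:ℝ) < t := by positivity
    have hT2 : (2:ℝ) ≤ t := by exact_mod_cast ht2
    set T : ℝ := (t:ℝ) with hT
    set q : ℝ := 1/T with hq
    set x : ℝ := (m:ℝ)/T with hx
    have hq0 : 0 ≤ q := by positivity
    have hqhalf : q ≤ 1/2 := by
      rw [hq]; rw [div_le_div_iff₀ hT0 (by norm_num)]; linarith
    have hx1 : x ≤ 1 := by
      rw [hx, div_le_one hT0, hT]; exact_mod_cast h1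
    have hxhalf : 1/2 < x := by
      rw [hx, lt_div_iff₀ hT0]
      have : (t:ℝ) < 2*m := by exact_mod_cast h2
      linarith
    -- step A
    have hA : (4:ℝ) ^ (-q) ≤ 1 - q := chord1 hq0 hqhalf
    have h4q0 : (0:ℝ) ≤ (4:ℝ)^(-q) := Real.rpow_nonneg (by norm_num) _
    -- step B
    have hB : (4:ℝ) ^ (-(q*(m-1:ℕ))) ≤ (1-q)^(m-1) := by
      calc (4:ℝ) ^ (-(q*(m-1:ℕ))) = ((4:ℝ)^(-q))^(m-1) := by
            rw [← Real.rpow_natCast ((4:ℝ)^(-q)) (m-1), ← Real.rpow_mul (by norm_num)]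
            ring_nf
        _ ≤ (1-q)^(m-1) := pow_le_pow_left₀ h4q0 hA _
    have hB2 : (4:ℝ)^(-x) ≤ (4:ℝ) ^ (-(q*(m-1:ℕ))) := by
      apply Real.rpow_le_rpow_left_iff (by norm_num : (1:ℝ) < 4) |>.mpr
      have hmc : ((m-1:ℕ):ℝ) = (m:ℝ) - 1 := by
        have : (1:ℕ) ≤ m := hm
        push_cast [this]; ring
      rw [hmc, neg_le_neg_iff, hx, hq]
      rw [div_mul_eq_mul_div, one_mul, div_le_div_iff₀ hT0 hT0]
      have hm0 : (0:ℝ) ≤ (m:ℝ) := by positivity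
      nlinarith
    -- step C
    have hC : (4:ℝ)^x ≤ 4*x := chord2 (le_of_lt hxhalf) hx1
    -- combine
    have hTm1 : T - 1 = T*(1-q) := by
      rw [hq, mul_sub, mul_one, mul_one_div_cancel (ne_of_gt hT0)]
    have hpow : (T-1)^(m-1) = T^(m-1) * (1-q)^(m-1) := by
      rw [hTm1, mul_pow]
    have hmx : (m:ℝ) = x * T := by
      rw [hx]; field_simp
    -- 4 m 4^{-x} ≥ T
    have h4x0 : (0:ℝ) < (4:ℝ)^(-x) := Real.rpow_pos_of_pos (by norm_num) _
    have hkey : T ≤ 4 * (m:ℝ) * (4:ℝ)^(-x) := by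
      have hinv : (4:ℝ)^(-x) * (4:ℝ)^x = 1 := by
        rw [← Real.rpow_add (by norm_num)]; simp
      have : (4:ℝ)^x * T ≤ 4 * x * T := by nlinarith
      calc T = ((4:ℝ)^(-x) * (4:ℝ)^x) * T := by rw [hinv]; ring
        _ = (4:ℝ)^(-x) * ((4:ℝ)^x * T) := by ring
        _ ≤ (4:ℝ)^(-x) * (4 * x * T) := by nlinarith
        _ = 4 * (m:ℝ) * (4:ℝ)^(-x) := by rw [hmx]; ring
    have hTpow0 : (0:ℝ) ≤ T^(m-1) := by positivity
    have hfin : T^(m-1) * T ≤ 4 * (m:ℝ) * ((T-1)^(m-1)) := by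
      calc T^(m-1) * T ≤ T^(m-1) * (4 * (m:ℝ) * (4:ℝ)^(-x)) := by nlinarith
        _ = 4 * (m:ℝ) * (T^(m-1) * (4:ℝ)^(-x)) := by ring
        _ ≤ 4 * (m:ℝ) * (T^(m-1) * (1-q)^(m-1)) := by
            have h1q : (4:ℝ)^(-x) ≤ (1-q)^(m-1) := le_trans hB2 hB
            have hm0 : (0:ℝ) ≤ (m:ℝ) := by positivity
            have := mul_le_mul_of_nonneg_left h1q hTpow0
            nlinarith
        _ = 4 * (m:ℝ) * ((T-1)^(m-1)) := by rw [hpow]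
    calc T^m = T^(m-1) * T := by
          rw [← pow_succ]; congr 1; omega
      _ ≤ 4 * (m:ℝ) * ((T-1)^(m-1)) := hfin

lemma card_filter_lt (M r : ℕ) (h : r ≤ M) :
    (Finset.filter (fun v : Fin M => v.val < r) Finset.univ).card = r := by
  have him : Finset.filter (fun v : Fin M => v.val < r) Finset.univ
      = Finset.image (Fin.castLE h) (Finset.univ : Finset (Fin r)) := by
    ext v
    simp only [mem_filter, mem_univ, true_and, mem_image]
    constructor
    · intro hv; exact ⟨⟨v.val, hv⟩, by ext; simp⟩
    · rintro ⟨w, rfl⟩; simpa using w.2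
  rw [him, Finset.card_image_of_injective _ (Fin.castLE_injective h)]
  simp

lemma key_group {k : ℕ} (C S : Finset (Fin k)) (h1 : (S ∩ C).card = 1)
    (H : Subgroup (FreeGroup (Fin k))) (hH : ∀ i : Fin k, FreeGroup.of i ∉ H ↔ i ∈ C) :
    ((S.sort (· ≤ ·)).map FreeGroup.of).prod ∉ H := by
  obtain ⟨c, hc⟩ := Finset.card_eq_one.mp h1
  have hcS : c ∈ S := by
    have : c ∈ S ∩ C := by rw [hc]; exact Finset.mem_singleton_self c
    exact (Finset.mem_inter.mp this).1
  have hcC : c ∈ C := by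
    have : c ∈ S ∩ C := by rw [hc]; exact Finset.mem_singleton_self c
    exact (Finset.mem_inter.mp this).2
  have honly : ∀ i ∈ S, i ≠ c → i ∉ C := by
    intro i hiS hne hiC
    have : i ∈ S ∩ C := Finset.mem_inter.mpr ⟨hiS, hiC⟩
    rw [hc, Finset.mem_singleton] at this
    exact hne this
  have hmem : c ∈ S.sort (· ≤ ·) := by rw [Finset.mem_sort]; exact hcS
  obtain ⟨l₁, l₂, heq⟩ := List.append_of_mem hmem
  rw [heq]
  have hnd : (l₁ ++ c :: l₂).Nodup := by rw [← heq]; exact S.sort_nodup _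
  have hc1 : c ∉ l₁ := by
    intro h
    exact (List.disjoint_of_nodup_append hnd) h List.mem_cons_self
  have hc2 : c ∉ l₂ := by
    have := List.Nodup.of_append_right hnd
    rw [List.nodup_cons] at this
    exact this.1
  have hmemS : ∀ i, i ∈ l₁ ++ c :: l₂ → i ∈ S := by
    intro i hi; rw [← Finset.mem_sort (α := Fin k) (· ≤ ·), heq]; exact hi
  have hP1 : (l₁.map FreeGroup.of).prod ∈ H := by
    apply Subgroup.list_prod_mem
    intro x hx
    rw [List.mem_map] at hx
    obtain ⟨i, hi, rfl⟩ := hx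
    have hiS : i ∈ S := hmemS i (List.mem_append_left _ hi)
    have hne : i ≠ c := fun h => hc1 (h ▸ hi)
    have : ¬ (FreeGroup.of i ∉ H) := fun h => honly i hiS hne ((hH i).mp h)
    exact not_not.mp this
  have hP2 : (l₂.map FreeGroup.of).prod ∈ H := by
    apply Subgroup.list_prod_mem
    intro x hx
    rw [List.mem_map] at hx
    obtain ⟨i, hi, rfl⟩ := hx
    have hiS : i ∈ S := hmemS i (List.mem_append_right _ (List.mem_cons_of_mem _ hi))
    have hne : i ≠ c := fun h => hc2 (h ▸ hi)
    have : ¬ (FreeGroup.of i ∉ H) := fun h => honly i hiS hne ((hH i).mp h)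
    exact not_not.mp this
  intro hin
  have hsplit : ((l₁ ++ c :: l₂).map FreeGroup.of).prod
      = (l₁.map FreeGroup.of).prod * (FreeGroup.of c * (l₂.map FreeGroup.of).prod) := by
    rw [List.map_append, List.prod_append, List.map_cons, List.prod_cons]
  rw [hsplit] at hin
  have : FreeGroup.of c ∈ H := by
    have h2 : FreeGroup.of c * (l₂.map FreeGroup.of).prod ∈ H :=
      (Subgroup.mul_mem_cancel_left H hP1).mp hin
    have h3 := (Subgroup.mul_mem_cancel_right H hP2).mp h2
    exact h3
  exact ((hH c).mpr hcC) this

lemma count_good (k L : ℕ) (hkL : k ≤ 2^L) (C : Finset (Fin k)) (hC : C.Nonempty) :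
    ((2:ℝ))^(L*k) ≤ 4 * ((Finset.filter
      (fun ω : Fin (L+1) × (Fin k → Fin (2^L)) => (Sset L ω ∩ C).card = 1)
      Finset.univ).card : ℝ) := by
  set m := C.card with hm
  have hm1 : 1 ≤ m := Finset.card_pos.mpr hC
  have hmk : m ≤ k := by
    simpa [hm] using Finset.card_le_card (Finset.subset_univ C) |>.trans (by simp)
  set j := Nat.clog 2 m with hj
  have hmj : m ≤ 2^j := Nat.le_pow_clog (by norm_num) m
  have hjL : j ≤ L := by
    have h1 : Nat.clog 2 m ≤ Nat.clog 2 (2^L) :=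
      Nat.clog_mono_right 2 (le_trans hmk hkL)
    rwa [Nat.clog_pow 2 L (by norm_num)] at h1
  have ht2 : 2^j < 2*m := by
    rcases eq_or_lt_of_le hm1 with h1 | h2
    · rw [hj, ← h1]; simp [Nat.clog_one_right]
    · have hp := Nat.pow_pred_clog_lt_self (by norm_num : 1 < 2) h2
      have hj1 : 1 ≤ j := by
        have h0 : 0 < Nat.clog 2 m := Nat.clog_pos (by norm_num) h2
        omega
      have hp' : 2^(j-1) < m := by
        rw [hj]; simpa [Nat.pred_eq_sub_one] using hp
      have h2j : 2^j = 2 * 2^(j-1) := by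
        rw [← pow_succ']; congr 1; omega
      omega
  set M := 2^L with hM
  set r := 2^(L-j) with hr
  have hrM : r ≤ M := Nat.pow_le_pow_right (by norm_num) (by omega)
  have hrMj : r * 2^j = M := by
    rw [hr, hM, ← pow_add]; congr 1; omega
  -- the sets
  set Tc : Fin k → Fin k → Finset (Fin M) := fun c i =>
    if i = c then Finset.filter (fun v : Fin M => v.val < r) Finset.univ
    else if i ∈ C then Finset.filter (fun v : Fin M => ¬ v.val < r) Finset.univ
    else Finset.univ with hTc
  set GoodG : Finset (Fin k → Fin M) := C.biUnion (fun c => Fintype.piFinset (Tc c)) with hGoodG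
  -- cards of pieces
  have hcardT : ∀ c ∈ C, (Fintype.piFinset (Tc c)).card = r * (M-r)^(m-1) * M^(k-m) := by
    intro c hc
    rw [Fintype.card_piFinset]
    have hprod : ∀ i : Fin k, (Tc c i).card =
        if i = c then r else if i ∈ C then M - r else M := by
      intro i
      rw [hTc]
      by_cases h1 : i = c
      · simp only [h1, if_pos rfl]; exact card_filter_lt M r hrM
      · simp only [if_neg h1]
        by_cases h2 : i ∈ C
        · simp only [if_pos h2]
          have hsum := Finset.card_filter_add_card_filter_not
            (p := fun v : Fin M => v.val < r) (s := (Finset.univ : Finset (Fin M)))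
          have h3 := card_filter_lt M r hrM
          have h4 : (Finset.univ : Finset (Fin M)).card = M := by simp [hM]
          omega
        · simp only [if_neg h2]; simp [hM]
    calc ∏ i, (Tc c i).card
        = ∏ i, (if i = c then r else if i ∈ C then M - r else M) := by
          exact Finset.prod_congr rfl (fun i _ => hprod i)
      _ = r * (M-r)^(m-1) * M^(k-m) := by
          rw [← Finset.prod_sdiff (Finset.subset_univ C)]
          have hout : ∏ i ∈ Finset.univ \ C, (if i = c then r else if i ∈ C then M - r else M)
              = M^(k-m) := by
            rw [Finset.prod_congr rfl (fun i hi => ?_), Finset.prod_const]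
            · congr 1
              rw [Finset.card_sdiff_of_subset (Finset.subset_univ C)]
              simp [hm]
            · rw [Finset.mem_sdiff] at hi
              have h1 : i ≠ c := fun h => hi.2 (h ▸ hc)
              simp [h1, hi.2]
          have hin : ∏ i ∈ C, (if i = c then r else if i ∈ C then M - r else M)
              = (M-r)^(m-1) * r := by
            rw [Finset.prod_eq_prod_diff_singleton_mul hc]
            have h2 : ∏ i ∈ C \ {c}, (if i = c then r else if i ∈ C then M - r else M)
                = (M-r)^(m-1) := by
              rw [Finset.prod_congr rfl (fun i hi => ?_), Finset.prod_const]
              · congr 1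
                rw [Finset.card_sdiff_of_subset (by simpa using hc)]
                simp [hm]
              · rw [Finset.mem_sdiff, Finset.mem_singleton] at hi
                simp [hi.1, hi.2]
            rw [h2]
            simp [hc]
          rw [hout, hin]; ring
  -- disjointness
  have hdisj : ∀ c₁ ∈ C, ∀ c₂ ∈ C, c₁ ≠ c₂ →
      Disjoint (Fintype.piFinset (Tc c₁)) (Fintype.piFinset (Tc c₂)) := by
    intro c₁ h1 c₂ h2 hne
    rw [Finset.disjoint_left]
    intro g hg hg'
    rw [Fintype.mem_piFinset] at hg hg'
    have ha := hg c₁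
    have hb := hg' c₁
    simp only [hTc] at ha hb
    simp only [if_true] at ha
    rw [if_neg hne, if_pos h1] at hb
    simp only [Finset.mem_filter] at ha hb
    exact hb.2 ha.2
  have hcardG : GoodG.card = m * (r * (M-r)^(m-1) * M^(k-m)) := by
    rw [hGoodG, Finset.card_biUnion hdisj]
    rw [Finset.sum_congr rfl hcardT, Finset.sum_const, hm]
    ring
  -- injection into the filtered set
  set jf : Fin (L+1) := ⟨j, by omega⟩ with hjf
  have hsub : GoodG.image (fun g => ((jf, g) : Fin (L+1) × (Fin k → Fin (2^L)))) ⊆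
      Finset.filter (fun ω : Fin (L+1) × (Fin k → Fin (2^L)) => (Sset L ω ∩ C).card = 1)
        Finset.univ := by
    intro ω hω
    rw [Finset.mem_image] at hω
    obtain ⟨g, hg, rfl⟩ := hω
    rw [hGoodG, Finset.mem_biUnion] at hg
    obtain ⟨c, hc, hgc⟩ := hg
    rw [Finset.mem_filter]
    refine ⟨Finset.mem_univ _, ?_⟩
    have hSC : Sset L ((jf, g)) ∩ C = {c} := by
      ext i
      rw [Fintype.mem_piFinset] at hgc
      simp only [Finset.mem_inter, Sset, Finset.mem_filter, Finset.mem_univ, true_and,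
        Finset.mem_singleton]
      constructor
      · rintro ⟨hlt, hiC⟩
        by_contra hne
        have h5 := hgc i
        simp only [hTc] at h5
        rw [if_neg hne, if_pos hiC] at h5
        simp only [Finset.mem_filter] at h5
        exact h5.2 hlt
      · intro hi
        have h5 := hgc c
        simp only [hTc] at h5
        simp only [if_true] at h5
        simp only [Finset.mem_filter] at h5
        rw [hi]
        exact ⟨h5.2, hc⟩
    rw [hSC]; simp
  have hinj : Function.Injective (fun g => ((jf, g) : Fin (L+1) × (Fin k → Fin (2^L)))) := by
    intro a b h; simpa using congrArg Prod.snd h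
  have hcard_le : GoodG.card ≤ (Finset.filter
      (fun ω : Fin (L+1) × (Fin k → Fin (2^L)) => (Sset L ω ∩ C).card = 1)
      Finset.univ).card := by
    calc GoodG.card = (GoodG.image (fun g => ((jf, g) : Fin (L+1) × (Fin k → Fin (2^L))))).card :=
          (Finset.card_image_of_injective _ hinj).symm
      _ ≤ _ := Finset.card_le_card hsub
  -- real inequality
  have hreal : ((2:ℝ))^(L*k) ≤ 4 * (GoodG.card : ℝ) := by
    rw [hcardG]
    push_cast
    have hMr : ((M - r : ℕ) : ℝ) = (M:ℝ) - r := by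
      push_cast [hrM]; ring
    rw [hMr]
    have hcore := core hm1 hmj ht2
    -- (2^L)^k = M^m * M^(k-m)
    have hMk : ((2:ℝ))^(L*k) = ((M:ℕ):ℝ)^m * ((M:ℕ):ℝ)^(k-m) := by
      rw [← pow_add]
      have : m + (k - m) = k := by omega
      rw [this, hM]
      push_cast
      rw [← pow_mul]
    have hMm : ((M:ℕ):ℝ)^m = ((r:ℕ):ℝ)^m * ((2:ℝ)^j)^m := by
      rw [← mul_pow]
      congr 1
      rw [← hrMj]
      push_cast
      ring
    have hMrr : ((M:ℝ) - r) = (r:ℝ) * ((2:ℝ)^j - 1) := by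
      rw [← hrMj]; push_cast; ring
    have h2j : ((2^j : ℕ):ℝ) = (2:ℝ)^j := by push_cast; ring
    have hcore' : ((2:ℝ)^j)^m ≤ 4 * m * ((2:ℝ)^j - 1)^(m-1) := by
      have := hcore
      rw [h2j] at this
      exact this
    have hr0 : (0:ℝ) ≤ (r:ℝ) := by positivity
    have hrm0 : (0:ℝ) ≤ ((r:ℕ):ℝ)^m := by positivity
    rw [hMk, hMm, hMrr]
    have hrsplit : ((r:ℕ):ℝ)^m = (r:ℝ) * (r:ℝ)^(m-1) := by
      rw [← pow_succ']
      congr 1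
      omega
    have hstep : ((r:ℕ):ℝ)^m * ((2:ℝ)^j)^m ≤
        4 * m * ((r:ℝ) * ((r:ℝ) * ((2:ℝ)^j - 1))^(m-1)) := by
      calc ((r:ℕ):ℝ)^m * ((2:ℝ)^j)^m ≤ ((r:ℕ):ℝ)^m * (4 * m * ((2:ℝ)^j - 1)^(m-1)) := by
            apply mul_le_mul_of_nonneg_left hcore' hrm0
        _ = 4 * m * ((r:ℝ) * ((r:ℝ)^(m-1) * ((2:ℝ)^j - 1)^(m-1))) := by
            rw [hrsplit]; ring
        _ = 4 * m * ((r:ℝ) * ((r:ℝ) * ((2:ℝ)^j - 1))^(m-1)) := by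
            rw [mul_pow]
    have hMnm : (0:ℝ) ≤ ((M:ℕ):ℝ)^(k-m) := by positivity
    calc ((r:ℕ):ℝ)^m * ((2:ℝ)^j)^m * ((M:ℕ):ℝ)^(k-m)
        ≤ (4 * m * ((r:ℝ) * ((r:ℝ) * ((2:ℝ)^j - 1))^(m-1))) * ((M:ℕ):ℝ)^(k-m) := by
          apply mul_le_mul_of_nonneg_right hstep hMnm
      _ = 4 * ((m:ℝ) * ((r:ℝ) * ((r:ℝ) * ((2:ℝ)^j - 1))^(m-1) * ((M:ℕ):ℝ)^(k-m))) := by ring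
  have hfin : (GoodG.card : ℝ) ≤ ((Finset.filter
      (fun ω : Fin (L+1) × (Fin k → Fin (2^L)) => (Sset L ω ∩ C).card = 1)
      Finset.univ).card : ℝ) := by exact_mod_cast hcard_le
  linarith

lemma arith (L : ℕ) (x : ℝ) (hL : 1 ≤ L) (hx1 : 1 ≤ x) (hxU : x ≤ L)
    (hLx : (L:ℝ) - 1 < x) (hL2 : L = 2 → (3/2:ℝ) ≤ x) :
    ((L:ℝ)+1) * x * Real.log 2 + 36*(L:ℝ)*((L:ℝ)+1) * Real.log 2 < 54*(L:ℝ)*x := by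
  have hlog : Real.log 2 < 0.6931471808 := Real.log_two_lt_d9
  have hlog0 : 0 < Real.log 2 := Real.log_pos (by norm_num)
  rcases Nat.lt_or_ge L 3 with h3 | h3
  · interval_cases L
    · -- L = 1 : x = 1
      have : x = 1 := le_antisymm (by exact_mod_cast hxU) hx1
      subst this; norm_num; nlinarith
    · -- L = 2 : x ≥ 3/2
      have h32 : (3/2:ℝ) ≤ x := hL2 rfl
      push_cast
      nlinarith
  · -- L ≥ 3
    have hL3 : (3:ℝ) ≤ (L:ℝ) := by exact_mod_cast h3
    have hx2 : (2:ℝ) ≤ x := by linarith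
    have h1 : (0:ℝ) < 54*(L:ℝ) - 0.7*((L:ℝ)+1) := by nlinarith
    have h2 : Real.log 2 < 0.7 := by linarith
    nlinarith [mul_pos h1 (sub_pos.mpr hLx), mul_lt_mul_of_pos_right h2 (by nlinarith : (0:ℝ) < ((L:ℝ)+1)*x)]

lemma exists_good_f (k : ℕ) (hk : 2 ≤ k) :
    ∃ f : Fin (432*k*⌈Real.logb 2 k⌉₊) →
        (Fin (⌈Real.logb 2 k⌉₊+1) × (Fin k → Fin (2^⌈Real.logb 2 k⌉₊))),
      ∀ C : Finset (Fin k), C.Nonempty →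
        ((432*k*⌈Real.logb 2 k⌉₊ : ℕ) : ℝ) ≤ 12 * Real.logb 2 k *
          ((Finset.filter (fun i => (Sset ⌈Real.logb 2 k⌉₊ (f i) ∩ C).card = 1)
            Finset.univ).card : ℝ) := by
  set x := Real.logb 2 k with hxdef
  set L := ⌈x⌉₊ with hLdef
  set n := 432*k*L with hndef
  have hk0 : (0:ℝ) < k := by positivity
  have hk1 : (1:ℝ) < k := by exact_mod_cast hk
  have hx1 : 1 ≤ x := by
    rw [hxdef, Real.le_logb_iff_rpow_le (by norm_num) hk0]
    rw [Real.rpow_one]; exact_mod_cast hk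
  have hx0 : (0:ℝ) < x := by linarith
  have hL1 : 1 ≤ L := by
    rw [hLdef]; exact Nat.one_le_ceil_iff.mpr hx0
  have hxU : x ≤ L := Nat.le_ceil x
  have hLx : (L:ℝ) - 1 < x := by
    by_contra hcon
    push_neg at hcon
    have h1 : x ≤ ((L - 1 : ℕ) : ℝ) := by
      have : ((L - 1 : ℕ) : ℝ) = (L:ℝ) - 1 := by
        push_cast [hL1]; ring
      rw [this]; exact hcon
    have h2 : L ≤ L - 1 := by
      rw [hLdef]; exact Nat.ceil_le.mpr h1
    omega
  have hkL : k ≤ 2^L := by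
    have h1 : (k:ℝ) = (2:ℝ)^x := by
      rw [hxdef, Real.rpow_logb (by norm_num) (by norm_num) hk0]
    have h2 : (2:ℝ)^x ≤ (2:ℝ)^(L:ℝ) := by
      apply Real.rpow_le_rpow_of_exponent_le (by norm_num) hxU
    have h3 : (2:ℝ)^(L:ℝ) = ((2^L : ℕ) : ℝ) := by
      rw [Real.rpow_natCast]; push_cast; ring
    have : (k:ℝ) ≤ ((2^L : ℕ) : ℝ) := by rw [h1]; rw [h3] at h2; exact h2
    exact_mod_cast this
  have hL2 : L = 2 → (3/2:ℝ) ≤ x := by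
    intro hLeq
    have hk3 : 3 ≤ k := by
      by_contra hcon
      have : k = 2 := by omega
      subst this
      rw [hxdef] at hLdef
      simp [Real.logb_self_eq_one] at hLdef
      omega
    have h1 : Real.logb 2 3 ≤ x := by
      rw [hxdef]
      apply Real.logb_le_logb_of_le (by norm_num : (1:ℝ) < 2) (by norm_num)
      exact_mod_cast hk3
    have h2 : (3/2:ℝ) ≤ Real.logb 2 3 := by
      rw [Real.logb, le_div_iff₀ (Real.log_pos (by norm_num))]
      have h82 : Real.log 8 = 3 * Real.log 2 := by
        rw [show (8:ℝ) = 2^3 by norm_num, Real.log_pow]; push_cast; ring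
      have h92 : Real.log 9 = 2 * Real.log 3 := by
        rw [show (9:ℝ) = 3^2 by norm_num, Real.log_pow]; push_cast; ring
      have h8 : Real.log 8 ≤ Real.log 9 := Real.log_le_log (by norm_num) (by norm_num)
      linarith
    linarith
  -- the probability space
  set Ω : Type := Fin (L+1) × (Fin k → Fin (2^L)) with hΩdef
  have hcardΩ : (Fintype.card Ω : ℝ) = ((L:ℝ)+1) * 2^(L*k) := by
    have hcn : Fintype.card Ω = (L+1) * 2^(L*k) := by
      show Fintype.card (Fin (L+1) × (Fin k → Fin (2^L))) = _
      simp only [Fintype.card_prod, Fintype.card_fun, Fintype.card_fin]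
      rw [← pow_mul]
    rw [hcn]; push_cast; ring
  set N : ℝ := ((L:ℝ)+1) * 2^(L*k) with hNdef
  have hN0 : 0 < N := by rw [hNdef]; positivity
  -- weights
  set τ : ℝ := (n:ℝ) / (12*x) with hτdef
  set θ : ℝ := ((L:ℝ)+1) * 2^(L*k) - 2^(L*k)/8 with hθdef
  have hθ0 : 0 ≤ θ := by
    rw [hθdef]
    have : (1:ℝ) ≤ (L:ℝ)+1 := by
      have : (0:ℝ) ≤ (L:ℝ) := Nat.cast_nonneg L
      linarith
    nlinarith [pow_pos (by norm_num : (0:ℝ) < 2) (L*k)]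
  have hθN : θ = N * (1 - 1/(8*((L:ℝ)+1))) := by
    rw [hθdef, hNdef]
    have hL0 : (0:ℝ) < (L:ℝ)+1 := by positivity
    field_simp
  -- bad sets
  set good : Finset (Fin k) → (Fin n → Ω) → ℕ := fun C f =>
    (Finset.filter (fun i => (Sset L (f i) ∩ C).card = 1) Finset.univ).card with hgooddef
  set bad : Finset (Fin k) → Finset (Fin n → Ω) := fun C =>
    Finset.filter (fun f => ((good C f : ℝ)) * (12*x) < n) Finset.univ with hbaddef
  -- Claim 1
  have claim1 : ∀ C : Finset (Fin k), C.Nonempty →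
      ((bad C).card : ℝ) ≤ (2:ℝ)^τ * θ^n := by
    intro C hC
    set w : Ω → ℝ := fun ω => if (Sset L ω ∩ C).card = 1 then (2:ℝ)⁻¹ else 1 with hwdef
    set G : ℕ := (Finset.filter (fun ω : Ω => (Sset L ω ∩ C).card = 1) Finset.univ).card
      with hGdef
    have hG4 : (2:ℝ)^(L*k) ≤ 4 * (G:ℝ) := count_good k L hkL C hC
    have hGN : (G:ℝ) ≤ Fintype.card Ω := by
      exact_mod_cast Finset.card_filter_le _ _
    have hsumw : ∑ ω : Ω, w ω = (Fintype.card Ω : ℝ) - (G:ℝ)/2 := by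
      rw [← Finset.sum_filter_add_sum_filter_not Finset.univ
        (fun ω : Ω => (Sset L ω ∩ C).card = 1)]
      have he1 : ∀ ω ∈ Finset.filter (fun ω : Ω => (Sset L ω ∩ C).card = 1) Finset.univ,
          w ω = (2:ℝ)⁻¹ := by
        intro ω hω
        rw [Finset.mem_filter] at hω
        rw [hwdef]; simp [hω.2]
      have he2 : ∀ ω ∈ Finset.filter (fun ω : Ω => ¬ (Sset L ω ∩ C).card = 1) Finset.univ,
          w ω = 1 := by
        intro ω hω
        rw [Finset.mem_filter] at hω
        rw [hwdef]; simp [hω.2]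
      have h1 : ∑ ω ∈ Finset.filter (fun ω : Ω => (Sset L ω ∩ C).card = 1) Finset.univ, w ω
          = (G:ℝ)/2 := by
        rw [Finset.sum_congr rfl he1, Finset.sum_const, ← hGdef, nsmul_eq_mul]
        ring
      have hcards := Finset.card_filter_add_card_filter_not
        (p := fun ω : Ω => (Sset L ω ∩ C).card = 1) (s := (Finset.univ : Finset Ω))
      rw [Finset.card_univ, ← hGdef] at hcards
      have hcast := congrArg (fun t : ℕ => (t:ℝ)) hcards
      push_cast at hcast
      have h2 : ∑ ω ∈ Finset.filter (fun ω : Ω => ¬ (Sset L ω ∩ C).card = 1) Finset.univ, w ω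
          = (Fintype.card Ω : ℝ) - (G:ℝ) := by
        rw [Finset.sum_congr rfl he2, Finset.sum_const, nsmul_eq_mul, mul_one]
        linarith
      rw [h1, h2]; ring
    have hprodw : ∀ f : Fin n → Ω, ∏ i, w (f i) = (2:ℝ)⁻¹ ^ (good C f) := by
      intro f
      rw [← Finset.prod_filter_mul_prod_filter_not Finset.univ
        (fun i => (Sset L (f i) ∩ C).card = 1)]
      have he1 : ∀ i ∈ Finset.filter (fun i => (Sset L (f i) ∩ C).card = 1) Finset.univ,
          w (f i) = (2:ℝ)⁻¹ := by
        intro i hi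
        rw [Finset.mem_filter] at hi
        rw [hwdef]; simp [hi.2]
      have he2 : ∀ i ∈ Finset.filter (fun i => ¬ (Sset L (f i) ∩ C).card = 1) Finset.univ,
          w (f i) = 1 := by
        intro i hi
        rw [Finset.mem_filter] at hi
        rw [hwdef]; simp [hi.2]
      have h1 : ∏ i ∈ Finset.filter (fun i => (Sset L (f i) ∩ C).card = 1) Finset.univ, w (f i)
          = (2:ℝ)⁻¹ ^ (good C f) := by
        rw [Finset.prod_congr rfl he1, Finset.prod_const]
      have h2 : ∏ i ∈ Finset.filter (fun i => ¬ (Sset L (f i) ∩ C).card = 1) Finset.univ, w (f i)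
          = 1 := by
        rw [Finset.prod_congr rfl he2, Finset.prod_const, one_pow]
      rw [h1, h2, mul_one]
    have hMGF : ∑ f : Fin n → Ω, ∏ i, w (f i) = (∑ ω : Ω, w ω)^n := by
      have := Finset.sum_prod_piFinset (Finset.univ : Finset Ω) (fun _ : Fin n => w)
      rw [Fintype.piFinset_univ] at this
      rw [this, Finset.prod_const, Finset.card_univ, Fintype.card_fin]
    have hwnn : ∀ f : Fin n → Ω, 0 ≤ ∏ i, w (f i) := by
      intro f
      apply Finset.prod_nonneg
      intro i _
      rw [hwdef]
      dsimp only
      split_ifs <;> norm_num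
    have hlow : ∀ f ∈ bad C, (2:ℝ)^(-τ) ≤ ∏ i, w (f i) := by
      intro f hf
      rw [hbaddef, Finset.mem_filter] at hf
      have hgle : (good C f : ℝ) ≤ τ := by
        rw [hτdef]
        rw [le_div_iff₀ (by positivity)]
        exact le_of_lt hf.2
      rw [hprodw f]
      have : (2:ℝ)⁻¹ ^ (good C f) = (2:ℝ)^(-(good C f : ℝ)) := by
        rw [← Real.rpow_natCast ((2:ℝ)⁻¹) (good C f)]
        rw [← Real.rpow_neg_one (2:ℝ), ← Real.rpow_mul (by norm_num)]
        congr 1; ring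
      rw [this]
      apply Real.rpow_le_rpow_of_exponent_le (by norm_num)
      linarith
    have hsum_le : ((bad C).card : ℝ) * (2:ℝ)^(-τ) ≤ (∑ ω : Ω, w ω)^n := by
      rw [← hMGF]
      calc ((bad C).card : ℝ) * (2:ℝ)^(-τ) = ∑ _f ∈ bad C, (2:ℝ)^(-τ) := by
            rw [Finset.sum_const]; ring
        _ ≤ ∑ f ∈ bad C, ∏ i, w (f i) := Finset.sum_le_sum (fun f hf => hlow f hf)
        _ ≤ ∑ f : Fin n → Ω, ∏ i, w (f i) := by
            apply Finset.sum_le_sum_of_subset_of_nonneg (Finset.subset_univ _)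
            intro f _ _; exact hwnn f
    have hsumθ : (∑ ω : Ω, w ω)^n ≤ θ^n := by
      apply pow_le_pow_left₀
      · rw [hsumw]; linarith
      · rw [hsumw, hcardΩ, hθdef]; linarith
    have h2τ : (0:ℝ) < (2:ℝ)^(-τ) := Real.rpow_pos_of_pos (by norm_num) _
    have := le_trans hsum_le hsumθ
    calc ((bad C).card : ℝ) = ((bad C).card : ℝ) * (2:ℝ)^(-τ) * (2:ℝ)^τ := by
          rw [mul_assoc, ← Real.rpow_add (by norm_num)]; simp
      _ ≤ θ^n * (2:ℝ)^τ := by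
          apply mul_le_mul_of_nonneg_right this (le_of_lt (Real.rpow_pos_of_pos (by norm_num) _))
      _ = (2:ℝ)^τ * θ^n := by ring
  -- Claim 2
  have claim2 : (2:ℝ)^k * ((2:ℝ)^τ * θ^n) < N^n := by
    have hβ : θ^n = N^n * (1 - 1/(8*((L:ℝ)+1)))^n := by
      rw [hθN, mul_pow]
    have hb0 : (0:ℝ) ≤ 1 - 1/(8*((L:ℝ)+1)) := by
      have hL0 : (1:ℝ) ≤ (L:ℝ)+1 := by
        have : (0:ℝ) ≤ (L:ℝ) := Nat.cast_nonneg L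
        linarith
      have : 1/(8*((L:ℝ)+1)) ≤ 1/8 := by
        apply div_le_div_of_nonneg_left (by norm_num) (by norm_num) (by nlinarith)
      linarith
    have hexp1 : (1 - 1/(8*((L:ℝ)+1)))^n ≤ Real.exp (-(1/(8*((L:ℝ)+1))) * n) := by
      calc (1 - 1/(8*((L:ℝ)+1)))^n ≤ (Real.exp (-(1/(8*((L:ℝ)+1)))))^n := by
            apply pow_le_pow_left₀ hb0
            have := Real.add_one_le_exp (-(1/(8*((L:ℝ)+1))))
            linarith
        _ = Real.exp (-(1/(8*((L:ℝ)+1))) * n) := by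
            rw [← Real.exp_nat_mul]; ring_nf
    have hexp2 : (2:ℝ)^(k:ℝ) * (2:ℝ)^τ = Real.exp (((k:ℝ) + τ) * Real.log 2) := by
      rw [← Real.rpow_add (by norm_num)]
      rw [Real.rpow_def_of_pos (by norm_num)]
      ring_nf
    have hkey : ((k:ℝ) + τ) * Real.log 2 < (1/(8*((L:ℝ)+1))) * n := by
      have harith := arith L x hL1 hx1 hxU hLx hL2
      have hτval : τ = 36*(k:ℝ)*(L:ℝ)/x := by
        rw [hτdef, hndef]
        push_cast
        field_simp
        ring
      have hnval : (n:ℝ) = 432*(k:ℝ)*(L:ℝ) := by rw [hndef]; push_cast; ring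
      rw [hτval, hnval]
      have hL0 : (0:ℝ) < (L:ℝ)+1 := by positivity
      have hscaled := mul_lt_mul_of_pos_left harith (by positivity : (0:ℝ) < (k:ℝ)/(x*((L:ℝ)+1)))
      have hid1 : (k:ℝ)/(x*((L:ℝ)+1)) * (((L:ℝ)+1) * x * Real.log 2 + 36*(L:ℝ)*((L:ℝ)+1) * Real.log 2)
          = ((k:ℝ) + 36*(k:ℝ)*(L:ℝ)/x) * Real.log 2 := by
        field_simp
      have hid2 : (k:ℝ)/(x*((L:ℝ)+1)) * (54*(L:ℝ)*x) = 1/(8*((L:ℝ)+1)) * (432*(k:ℝ)*(L:ℝ)) := by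
        field_simp
        ring
      rw [hid1, hid2] at hscaled
      linarith [hscaled]
    have hexp3 : Real.exp (((k:ℝ) + τ) * Real.log 2) * Real.exp (-(1/(8*((L:ℝ)+1))) * n) < 1 := by
      rw [← Real.exp_add]
      apply Real.exp_lt_one_iff.mpr
      linarith
    have h2k : (2:ℝ)^k = (2:ℝ)^(k:ℝ) := by
      rw [Real.rpow_natCast]
    have hNn0 : (0:ℝ) < N^n := by positivity
    calc (2:ℝ)^k * ((2:ℝ)^τ * θ^n)
        = ((2:ℝ)^(k:ℝ) * (2:ℝ)^τ) * θ^n := by rw [h2k]; ring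
      _ ≤ ((2:ℝ)^(k:ℝ) * (2:ℝ)^τ) * (N^n * Real.exp (-(1/(8*((L:ℝ)+1))) * n)) := by
          apply mul_le_mul_of_nonneg_left _ (by positivity)
          rw [hβ]
          apply mul_le_mul_of_nonneg_left hexp1 (by positivity)
      _ = (Real.exp (((k:ℝ) + τ) * Real.log 2) * Real.exp (-(1/(8*((L:ℝ)+1))) * n)) * N^n := by
          rw [hexp2]; ring
      _ < 1 * N^n := by
          apply mul_lt_mul_of_pos_right hexp3 hNn0
      _ = N^n := by ring
  -- union bound
  set CS := Finset.filter (fun C : Finset (Fin k) => C.Nonempty) Finset.univ with hCSdef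
  have hCScard : (CS.card : ℝ) ≤ (2:ℝ)^k := by
    have h1 : CS.card ≤ Fintype.card (Finset (Fin k)) := by
      rw [← Finset.card_univ]
      exact Finset.card_filter_le _ _
    have h2 : Fintype.card (Finset (Fin k)) = 2^k := by
      rw [Fintype.card_finset, Fintype.card_fin]
    calc (CS.card : ℝ) ≤ (Fintype.card (Finset (Fin k)) : ℝ) := by exact_mod_cast h1
      _ = (2:ℝ)^k := by rw [h2]; push_cast; ring
  have hunion : ((CS.biUnion bad).card : ℝ) < (Fintype.card (Fin n → Ω) : ℝ) := by
    have h1 : ((CS.biUnion bad).card : ℝ) ≤ ∑ C ∈ CS, ((bad C).card : ℝ) := by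
      exact_mod_cast Finset.card_biUnion_le
    have h2 : ∑ C ∈ CS, ((bad C).card : ℝ) ≤ ∑ _C ∈ CS, (2:ℝ)^τ * θ^n := by
      apply Finset.sum_le_sum
      intro C hC
      rw [hCSdef, Finset.mem_filter] at hC
      exact claim1 C hC.2
    have h3 : ∑ _C ∈ CS, (2:ℝ)^τ * θ^n = (CS.card : ℝ) * ((2:ℝ)^τ * θ^n) := by
      rw [Finset.sum_const]; ring
    have h4 : (CS.card : ℝ) * ((2:ℝ)^τ * θ^n) ≤ (2:ℝ)^k * ((2:ℝ)^τ * θ^n) := by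
      apply mul_le_mul_of_nonneg_right hCScard
      have : (0:ℝ) < (2:ℝ)^τ := Real.rpow_pos_of_pos (by norm_num) _
      positivity
    have h5 : (Fintype.card (Fin n → Ω) : ℝ) = N^n := by
      rw [Fintype.card_fun, Fintype.card_fin]
      push_cast
      rw [hcardΩ, hNdef]
    rw [h5]
    calc ((CS.biUnion bad).card : ℝ) ≤ (CS.card : ℝ) * ((2:ℝ)^τ * θ^n) := by linarith
      _ ≤ (2:ℝ)^k * ((2:ℝ)^τ * θ^n) := h4
      _ < N^n := claim2
  have hexists : ∃ f : Fin n → Ω, f ∉ CS.biUnion bad := by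
    by_contra hcon
    push_neg at hcon
    have : (Finset.univ : Finset (Fin n → Ω)) ⊆ CS.biUnion bad := fun f _ => hcon f
    have hle := Finset.card_le_card this
    rw [Finset.card_univ] at hle
    have : (Fintype.card (Fin n → Ω) : ℝ) ≤ ((CS.biUnion bad).card : ℝ) := by exact_mod_cast hle
    linarith
  obtain ⟨f, hf⟩ := hexists
  refine ⟨f, fun C hC => ?_⟩
  have hnotbad : f ∉ bad C := by
    intro hbad
    exact hf (Finset.mem_biUnion.mpr ⟨C, by rw [hCSdef]; simp [hC], hbad⟩)
  rw [hbaddef, Finset.mem_filter] at hnotbad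
  push_neg at hnotbad
  have := hnotbad (Finset.mem_univ f)
  rw [hgooddef] at this
  calc ((n:ℕ):ℝ) ≤ ((Finset.filter (fun i => (Sset L (f i) ∩ C).card = 1)
        Finset.univ).card : ℝ) * (12*x) := this
    _ = 12 * x * _ := by ring

theorem stmt5 (k : ℕ) (hk : 2 ≤ k) :
    ∃ A : Multiset (FreeGroup (Fin k)), A ≠ 0 ∧
      (∀ w ∈ A, ∃ S : Finset (Fin k),
        w = ((S.sort (· ≤ ·)).map FreeGroup.of).prod) ∧
      Multiset.card A ≤ 432 * k * ⌈Real.logb 2 k⌉₊ ∧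
      ∀ C : Finset (Fin k), C.Nonempty →
        ((A.filter (fun w => ∃ H : Subgroup (FreeGroup (Fin k)),
            (∀ i : Fin k, FreeGroup.of i ∉ H ↔ i ∈ C) ∧ w ∈ H)).card : ℝ)
          ≤ (1 - 1 / (12 * Real.logb 2 k)) * (Multiset.card A : ℝ) := by
  set x := Real.logb 2 k with hxdef
  set L := ⌈x⌉₊ with hLdef
  set n := 432*k*L with hndef
  obtain ⟨f, hf⟩ := exists_good_f k hk
  have hx1 : 1 ≤ x := by
    rw [hxdef, Real.le_logb_iff_rpow_le (by norm_num) (by positivity)]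
    rw [Real.rpow_one]; exact_mod_cast hk
  have hx0 : (0:ℝ) < x := by linarith
  have hL1 : 1 ≤ L := by rw [hLdef]; exact Nat.one_le_ceil_iff.mpr hx0
  have hn1 : 1 ≤ n := by
    rw [hndef]
    have : 1 ≤ k := by omega
    calc 1 = 432*1*1 - 431 := by norm_num
      _ ≤ 432*k*L := by nlinarith
  set g : Fin n → FreeGroup (Fin k) :=
    fun i => (((Sset L (f i)).sort (· ≤ ·)).map FreeGroup.of).prod with hgdef
  set A : Multiset (FreeGroup (Fin k)) := Multiset.map g Finset.univ.val with hAdef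
  have hcardA : Multiset.card A = n := by
    rw [hAdef, Multiset.card_map]
    simp
  refine ⟨A, ?_, ?_, ?_, ?_⟩
  · intro h0
    rw [← Multiset.card_eq_zero] at h0
    omega
  · intro w hw
    rw [hAdef, Multiset.mem_map] at hw
    obtain ⟨i, _, rfl⟩ := hw
    exact ⟨Sset L (f i), rfl⟩
  · rw [hcardA]
  · intro C hC
    have hfC : (n:ℝ) ≤ 12 * x *
        ((Finset.filter (fun i => (Sset L (f i) ∩ C).card = 1) Finset.univ).card : ℝ) := hf C hC
    set p : FreeGroup (Fin k) → Prop := fun w => ∃ H : Subgroup (FreeGroup (Fin k)),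
      (∀ i : Fin k, FreeGroup.of i ∉ H ↔ i ∈ C) ∧ w ∈ H with hpdef
    have hfilter : (A.filter p).card = (Finset.filter (fun i => p (g i)) Finset.univ).card := by
      rw [hAdef, Multiset.filter_map, Multiset.card_map]
      rfl
    set good := (Finset.filter (fun i => (Sset L (f i) ∩ C).card = 1) Finset.univ).card
      with hgooddef
    have himp : ∀ i : Fin n, p (g i) → ¬ (Sset L (f i) ∩ C).card = 1 := by
      intro i hpi hcard
      obtain ⟨H, hH, hmem⟩ := hpi
      exact key_group C (Sset L (f i)) hcard H hH hmem
    have hsub : Finset.filter (fun i => p (g i)) Finset.univ ⊆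
        Finset.filter (fun i => ¬ (Sset L (f i) ∩ C).card = 1) Finset.univ := by
      intro i hi
      rw [Finset.mem_filter] at hi ⊢
      exact ⟨hi.1, himp i hi.2⟩
    have hcards := Finset.card_filter_add_card_filter_not
      (p := fun i : Fin n => (Sset L (f i) ∩ C).card = 1) (s := (Finset.univ : Finset (Fin n)))
    rw [Finset.card_univ, Fintype.card_fin, ← hgooddef] at hcards
    have hle : (A.filter p).card ≤ n - good := by
      rw [hfilter]
      have := Finset.card_le_card hsub
      omega
    have hgoodn : good ≤ n := by omega
    -- real arithmetic
    have hgood_lb : (n:ℝ)/(12*x) ≤ (good:ℝ) := by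
      rw [div_le_iff₀ (by positivity)]
      calc (n:ℝ) ≤ 12 * x * good := hfC
        _ = good * (12*x) := by ring
    have h1 : ((A.filter p).card : ℝ) ≤ (n:ℝ) - good := by
      have h2 : ((A.filter p).card : ℝ) ≤ ((n - good : ℕ) : ℝ) := by exact_mod_cast hle
      have h3 : ((n - good : ℕ) : ℝ) = (n:ℝ) - good := by push_cast [hgoodn]; ring
      linarith
    rw [hcardA]
    have hfinal : (1 - 1/(12*x)) * (n:ℝ) = (n:ℝ) - (n:ℝ)/(12*x) := by
      field_simp
    rw [hfinal]
    linarith
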